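/- arXiv:1811.09893 — 3 statements merged into one kernel-verified Lean document; each statement's English description precedes it below -/
import Mathlib

section
/- There exist a complex Hilbert space H, a densely defined closed unbounded operator B on H, and a positive self-adjoint operator P on H with P ∘ P = B* ∘ B (i.e., P is the absolute value |B| of B), such that: the composition B ∘ B is bounded on its (dense) domain, the composition P ∘ B is bounded on its (dense) domain, while the composition B ∘ P is unbounded and closed. -/
/- Unbounded (partially defined) operators on a complex Hilbert space are modelled by
Mathlib's `LinearPMap` (`H →ₗ.[ℂ] H`).  `T†` is the adjoint, `T.IsClosed` means the graph
of `T` is closed, and `f - g` is the difference with domain `D(f) ⊓ D(g)`. -/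

noncomputable section

open LinearPMap

/-- The composition `S ∘ T` of two partially defined linear operators, with its natural
(maximal) domain `{x ∈ D(T) : T x ∈ D(S)}`, acting by `x ↦ S (T x)`. -/
def pComp {R E F G : Type*} [Ring R] [AddCommGroup E] [Module R E]
    [AddCommGroup F] [Module R F] [AddCommGroup G] [Module R G]
    (S : F →ₗ.[R] G) (T : E →ₗ.[R] F) : E →ₗ.[R] G where
  domain := (S.domain.comap T.toFun).map T.domain.subtype
  toFun := (S.toFun.comp (T.toFun.restrict (q := S.domain) fun _ hx => hx)).comp
    (Submodule.equivMapOfInjective T.domain.subtype T.domain.injective_subtype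
      (S.domain.comap T.toFun)).symm.toLinearMap

/-- A partially defined operator is bounded if `‖T x‖ ≤ C‖x‖` on its domain for some `C ≥ 0`. -/
def IsBddOp {H : Type*} [NormedAddCommGroup H] [InnerProductSpace ℂ H]
    (T : H →ₗ.[ℂ] H) : Prop :=
  ∃ C : ℝ, 0 ≤ C ∧ ∀ x : T.domain, ‖T x‖ ≤ C * ‖(x : H)‖

/-- A partially defined operator is positive if `⟪T x, x⟫` is real and nonnegative
for every `x` in its domain. -/
def IsPosOp {H : Type*} [NormedAddCommGroup H] [InnerProductSpace ℂ H]
    (T : H →ₗ.[ℂ] H) : Prop :=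
  ∀ x : T.domain, 0 ≤ (inner ℂ (T x) ((x : H)) : ℂ).re ∧ (inner ℂ (T x) ((x : H)) : ℂ).im = 0

/-- A (bundled) complex Hilbert space. -/
structure HilbertC where
  carrier : Type
  [normed : NormedAddCommGroup carrier]
  [ips : InnerProductSpace ℂ carrier]
  [complete : CompleteSpace carrier]

attribute [instance] HilbertC.normed HilbertC.ips HilbertC.complete

/-- The product Hilbert space `H × H` (with inner product
`⟪(x₁,y₁),(x₂,y₂)⟫ = ⟪x₁,x₂⟫ + ⟪y₁,y₂⟫`), i.e. the `L²`-product `WithLp 2 (H × H)`. -/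
abbrev HxH (H : Type) [NormedAddCommGroup H] [InnerProductSpace ℂ H] : Type :=
  WithLp 2 (H × H)

/-- The canonical linear identification of the product Hilbert space `HxH H` with `H × H`. -/
abbrev prodE (H : Type) [NormedAddCommGroup H] [InnerProductSpace ℂ H] :
    HxH H ≃ₗ[ℂ] H × H := WithLp.linearEquiv 2 ℂ (H × H)

namespace Aux

abbrev K : Type := lp (fun _ : ℕ => ℂ) 2

lemma memℓp_iff {f : ℕ → ℂ} : Memℓp f 2 ↔ Summable (fun k => ‖f k‖ ^ (2:ℝ)) := by
  rw [memℓp_gen_iff (by norm_num)]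
  norm_num

lemma memℓp_of_finite {f : ℕ → ℂ} (h : {k | f k ≠ 0}.Finite) : Memℓp f 2 :=
  (memℓp_zero h).of_exponent_ge (by norm_num)

/-- generic multiplication/композиция operator -/
def Dgen (d : ℕ → ℂ) (σ : ℕ → ℕ) : Submodule ℂ K where
  carrier := {x | Memℓp (fun k => d k * (x : ∀ _ : ℕ, ℂ) (σ k)) 2}
  add_mem' := by
    intro x y hx hy
    have : (fun k => d k * ((x + y : K) : ∀ _ : ℕ, ℂ) (σ k))
        = (fun k => d k * (x : ∀ _:ℕ, ℂ) (σ k)) + (fun k => d k * (y : ∀ _:ℕ, ℂ) (σ k)) := by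
      funext k
      simp [mul_add]
    show Memℓp _ 2
    rw [this]
    exact hx.add hy
  zero_mem' := by
    have : (fun k => d k * ((0 : K) : ∀ _ : ℕ, ℂ) (σ k)) = (0 : ∀ _ : ℕ, ℂ) := by
      funext k; simp
    show Memℓp _ 2
    rw [this]
    exact zero_memℓp
  smul_mem' := by
    intro a x hx
    have : (fun k => d k * ((a • x : K) : ∀ _ : ℕ, ℂ) (σ k))
        = a • (fun k => d k * (x : ∀ _:ℕ, ℂ) (σ k)) := by
      funext k
      simp only [lp.coeFn_smul, Pi.smul_apply, smul_eq_mul]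
      ring
    show Memℓp _ 2
    rw [this]
    exact hx.const_smul a

lemma mem_Dgen {d : ℕ → ℂ} {σ : ℕ → ℕ} {x : K} :
    x ∈ Dgen d σ ↔ Memℓp (fun k => d k * (x : ∀ _ : ℕ, ℂ) (σ k)) 2 := Iff.rfl

def mkOp (d : ℕ → ℂ) (σ : ℕ → ℕ) : K →ₗ.[ℂ] K where
  domain := Dgen d σ
  toFun :=
  { toFun := fun x => (⟨fun k => d k * ((x : K) : ∀ _ : ℕ, ℂ) (σ k), x.2⟩ : K)
    map_add' := by
      intro x y
      apply Subtype.ext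
      funext k
      show d k * _ = d k * _ + d k * _
      have : ((((x : K) + (y : K)) : K) : ∀ _ : ℕ, ℂ) (σ k)
          = ((x : K) : ∀ _ : ℕ, ℂ) (σ k) + ((y : K) : ∀ _ : ℕ, ℂ) (σ k) := by
        rw [lp.coeFn_add]; rfl
      rw [Submodule.coe_add, this, mul_add]
    map_smul' := by
      intro a x
      apply Subtype.ext
      funext k
      show d k * _ = a * (d k * _)
      have : (((a • (x : K)) : K) : ∀ _ : ℕ, ℂ) (σ k)
          = a * ((x : K) : ∀ _ : ℕ, ℂ) (σ k) := by
        rw [lp.coeFn_smul]; rfl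
      rw [Submodule.coe_smul, this]
      ring }

@[simp] lemma mkOp_domain (d : ℕ → ℂ) (σ : ℕ → ℕ) : (mkOp d σ).domain = Dgen d σ := rfl

lemma mkOp_apply (d : ℕ → ℂ) (σ : ℕ → ℕ) (x : (mkOp d σ).domain) (k : ℕ) :
    ((mkOp d σ x : K) : ∀ _ : ℕ, ℂ) k = d k * ((x : K) : ∀ _ : ℕ, ℂ) (σ k) := rfl

lemma single_mem_Dgen (d : ℕ → ℂ) (σ : ℕ → ℕ) (hσ : ∀ k, k ≤ σ k + 1) (i : ℕ) (a : ℂ) :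
    (lp.single 2 i a : K) ∈ Dgen d σ := by
  rw [mem_Dgen]
  apply memℓp_of_finite
  apply (Set.finite_Iic (i + 1)).subset
  intro k hk
  simp only [Set.mem_setOf_eq] at hk
  by_contra hki
  simp only [Set.mem_Iic, not_le] at hki
  have hne : σ k ≠ i := by
    have := hσ k
    omega
  have hz : ((lp.single 2 i a : K) : ∀ _ : ℕ, ℂ) (σ k) = 0 := by
    rw [lp.single_apply]
    exact dif_neg hne
  rw [hz, mul_zero] at hk
  exact hk rfl

lemma dense_of_single_mem (S : Submodule ℂ K) (h : ∀ (i : ℕ) (a : ℂ), (lp.single 2 i a : K) ∈ S) :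
    Dense (S : Set K) := by
  intro x
  refine mem_closure_of_tendsto (lp.hasSum_single (by norm_num) x) ?_
  filter_upwards with s
  exact Submodule.sum_mem S fun i _ => h i _


/-! pComp lemmas -/

lemma mem_pComp_domain {S T : K →ₗ.[ℂ] K} {x : K} :
    x ∈ (pComp S T).domain ↔ ∃ h : x ∈ T.domain, T ⟨x, h⟩ ∈ S.domain := by
  constructor
  · rintro ⟨v, hv, rfl⟩
    exact ⟨v.2, hv⟩
  · rintro ⟨h, hS⟩
    exact ⟨⟨x, h⟩, hS, rfl⟩

lemma pComp_apply {S T : K →ₗ.[ℂ] K} {x : K} (hx : x ∈ T.domain)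
    (hSx : T ⟨x, hx⟩ ∈ S.domain) (h : x ∈ (pComp S T).domain) :
    pComp S T ⟨x, h⟩ = S ⟨T ⟨x, hx⟩, hSx⟩ := by
  set e := Submodule.equivMapOfInjective T.domain.subtype T.domain.injective_subtype
      (S.domain.comap T.toFun) with he
  have key : e.symm ⟨x, h⟩ = ⟨⟨x, hx⟩, hSx⟩ := by
    apply e.injective
    rw [LinearEquiv.apply_symm_apply]
    apply Subtype.ext
    rw [he]
    rw [Submodule.coe_equivMapOfInjective_apply]
    rfl
  show S.toFun ((T.toFun.restrict _) (e.symm ⟨x, h⟩)) = _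
  rw [key]
  rfl

lemma pComp_apply' {S T : K →ₗ.[ℂ] K} (x : (pComp S T).domain) :
    pComp S T x = S ⟨T ⟨(x : K), (mem_pComp_domain.mp x.2).1⟩,
      (mem_pComp_domain.mp x.2).2⟩ := by
  obtain ⟨x, hx⟩ := x
  exact pComp_apply _ _ hx

/-! The concrete operators -/

def creal (k : ℕ) : ℝ := if Even k then 0 else (k : ℝ)

lemma creal_nonneg (k : ℕ) : 0 ≤ creal k := by
  unfold creal; split
  · exact le_refl 0
  · positivity

def c (k : ℕ) : ℂ := ((creal k : ℝ) : ℂ)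

lemma c_conj (k : ℕ) : (starRingEnd ℂ) (c k) = c k := Complex.conj_ofReal _

lemma c_even {k : ℕ} (h : Even k) : c k = 0 := by
  unfold c creal; rw [if_pos h]; simp

lemma c_zero : c 0 = 0 := c_even (by simp)

lemma c_mul_succ (k : ℕ) : c k * c (k + 1) = 0 := by
  rcases Nat.even_or_odd k with h | h
  · rw [c_even h, zero_mul]
  · have : c (k + 1) = 0 := c_even (by simpa using h.add_one)
    rw [this, mul_zero]

lemma c_succ_mul (k : ℕ) : c (k + 1) * c k = 0 := by
  rw [mul_comm]; exact c_mul_succ k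

lemma norm_c_le (k : ℕ) : ‖c k‖ ≤ ‖c k * c k‖ := by
  unfold c creal
  split
  · simp
  · rename_i h
    rw [norm_mul, Complex.norm_real, Real.norm_natCast]
    have h1 : (1:ℝ) ≤ (k:ℝ) := by
      have : k ≠ 0 := by rintro rfl; exact h Even.zero
      exact_mod_cast Nat.one_le_iff_ne_zero.mpr this
    nlinarith

lemma c_odd (n : ℕ) : c (2 * n + 1) = ((2 * n + 1 : ℕ) : ℝ) := by
  unfold c creal
  rw [if_neg (by simp [Nat.even_add_one, parity_simps])]

def B : K →ₗ.[ℂ] K := mkOp (fun k => c (k + 1)) (fun k => k + 1)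
def P : K →ₗ.[ℂ] K := mkOp c id
def A : K →ₗ.[ℂ] K := mkOp c (fun k => k - 1)

lemma single_mem_B (i : ℕ) (a : ℂ) : (lp.single 2 i a : K) ∈ B.domain :=
  single_mem_Dgen _ _ (fun k => by omega) i a
lemma single_mem_P (i : ℕ) (a : ℂ) : (lp.single 2 i a : K) ∈ P.domain :=
  single_mem_Dgen _ _ (fun k => Nat.le_succ k) i a
lemma single_mem_A (i : ℕ) (a : ℂ) : (lp.single 2 i a : K) ∈ A.domain :=
  single_mem_Dgen _ _ (fun k => by omega) i a

lemma B_apply (x : B.domain) (k : ℕ) :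
    ((B x : K) : ∀ _ : ℕ, ℂ) k = c (k + 1) * ((x : K) : ∀ _ : ℕ, ℂ) (k + 1) := rfl
lemma P_apply (x : P.domain) (k : ℕ) :
    ((P x : K) : ∀ _ : ℕ, ℂ) k = c k * ((x : K) : ∀ _ : ℕ, ℂ) k := rfl
lemma A_apply (x : A.domain) (k : ℕ) :
    ((A x : K) : ∀ _ : ℕ, ℂ) k = c k * ((x : K) : ∀ _ : ℕ, ℂ) (k - 1) := rfl

lemma mem_B_domain {x : K} : x ∈ B.domain ↔
    Memℓp (fun k => c (k + 1) * (x : ∀ _ : ℕ, ℂ) (k + 1)) 2 := Iff.rfl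
lemma mem_P_domain {x : K} : x ∈ P.domain ↔
    Memℓp (fun k => c k * (x : ∀ _ : ℕ, ℂ) k) 2 := Iff.rfl
lemma mem_A_domain {x : K} : x ∈ A.domain ↔
    Memℓp (fun k => c k * (x : ∀ _ : ℕ, ℂ) (k - 1)) 2 := Iff.rfl

lemma dense_B : Dense (B.domain : Set K) := dense_of_single_mem _ single_mem_B
lemma dense_P : Dense (P.domain : Set K) := dense_of_single_mem _ single_mem_P

/-! coordinatewise evaluation is continuous -/
lemma continuous_eval (k : ℕ) : Continuous fun x : K => (x : ∀ _ : ℕ, ℂ) k := by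
  apply (LipschitzWith.of_dist_le_mul (K := 1) ?_).continuous
  intro x y
  simp only [NNReal.coe_one, one_mul, dist_eq_norm]
  have : (x : ∀ _ : ℕ, ℂ) k - (y : ∀ _ : ℕ, ℂ) k = ((x - y : K) : ∀ _ : ℕ, ℂ) k := by
    rw [lp.coeFn_sub]; rfl
  rw [this]
  exact lp.norm_apply_le_norm (by norm_num) (x - y) k

lemma ext_K {x y : K} (h : ∀ k, (x : ∀ _ : ℕ, ℂ) k = (y : ∀ _ : ℕ, ℂ) k) : x = y :=
  Subtype.ext (funext h)

lemma norm_single (i : ℕ) (a : ℂ) : ‖(lp.single 2 i a : K)‖ = ‖a‖ :=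
  lp.norm_single (E := fun _ : ℕ => ℂ) (p := 2) (by norm_num) i a

lemma single_coord (i : ℕ) (a : ℂ) (k : ℕ) :
    ((lp.single 2 i a : K) : ∀ _ : ℕ, ℂ) k = if k = i then a else 0 := by
  rw [lp.single_apply]
  split <;> simp_all

/-! closedness -/

lemma isClosed_coordSet (g : ℕ → ℂ) :
    IsClosed {z : K × K | ∀ k, (z.2 : ∀ _ : ℕ, ℂ) k = g k * (z.1 : ∀ _ : ℕ, ℂ) (k + 1)} := by
  have : {z : K × K | ∀ k, (z.2 : ∀ _ : ℕ, ℂ) k = g k * (z.1 : ∀ _ : ℕ, ℂ) (k + 1)}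
      = ⋂ k, {z : K × K | (z.2 : ∀ _ : ℕ, ℂ) k = g k * (z.1 : ∀ _ : ℕ, ℂ) (k + 1)} := by
    ext z; simp [Set.mem_iInter]
  rw [this]
  exact isClosed_iInter fun k => isClosed_eq ((continuous_eval k).comp continuous_snd)
    (continuous_const.mul ((continuous_eval (k + 1)).comp continuous_fst))

lemma graph_B : (B.graph : Set (K × K))
    = {z : K × K | ∀ k, (z.2 : ∀ _ : ℕ, ℂ) k = c (k + 1) * (z.1 : ∀ _ : ℕ, ℂ) (k + 1)} := by
  ext z
  rw [SetLike.mem_coe, LinearPMap.mem_graph_iff]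
  constructor
  · rintro ⟨v, h1, h2⟩ k
    rw [← h2, ← h1]
    exact (B_apply v k).symm ▸ rfl
  · intro h
    have hx : z.1 ∈ B.domain := by
      rw [mem_B_domain]
      have : (fun k => c (k + 1) * (z.1 : ∀ _ : ℕ, ℂ) (k + 1)) = (z.2 : ∀ _ : ℕ, ℂ) := by
        funext k; exact (h k).symm
      rw [this]
      exact lp.memℓp z.2
    refine ⟨⟨z.1, hx⟩, rfl, ?_⟩
    apply ext_K
    intro k
    rw [B_apply]
    exact (h k).symm

lemma closed_B : B.IsClosed := by
  unfold LinearPMap.IsClosed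
  rw [graph_B]
  exact isClosed_coordSet _

/-! compositions with B on the inside are zero -/

lemma Bx_mem_B (x : B.domain) : (B x : K) ∈ B.domain := by
  rw [mem_B_domain]
  have : (fun k => c (k + 1) * ((B x : K) : ∀ _ : ℕ, ℂ) (k + 1)) = (0 : ∀ _ : ℕ, ℂ) := by
    funext k
    rw [B_apply, ← mul_assoc, c_mul_succ, zero_mul]
    rfl
  rw [this]
  exact zero_memℓp

lemma Bx_mem_P (x : B.domain) : (B x : K) ∈ P.domain := by
  rw [mem_P_domain]
  have : (fun k => c k * ((B x : K) : ∀ _ : ℕ, ℂ) k) = (0 : ∀ _ : ℕ, ℂ) := by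
    funext k
    rw [B_apply, ← mul_assoc, c_mul_succ, zero_mul]
    rfl
  rw [this]
  exact zero_memℓp

lemma dense_BB : Dense (((pComp B B).domain : Submodule ℂ K) : Set K) :=
  dense_of_single_mem _ fun i a => mem_pComp_domain.mpr ⟨single_mem_B i a, Bx_mem_B _⟩

lemma dense_PB : Dense (((pComp P B).domain : Submodule ℂ K) : Set K) :=
  dense_of_single_mem _ fun i a => mem_pComp_domain.mpr ⟨single_mem_B i a, Bx_mem_P _⟩

lemma BB_zero (x : (pComp B B).domain) : pComp B B x = 0 := by
  rw [pComp_apply']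
  apply ext_K
  intro k
  rw [B_apply]
  show c (k+1) * ((B _ : K) : ∀ _ : ℕ, ℂ) (k+1) = ((0 : K) : ∀ _ : ℕ, ℂ) k
  rw [B_apply, ← mul_assoc, c_mul_succ, zero_mul]
  simp

lemma PB_zero (x : (pComp P B).domain) : pComp P B x = 0 := by
  rw [pComp_apply']
  apply ext_K
  intro k
  rw [P_apply]
  show c k * ((B _ : K) : ∀ _ : ℕ, ℂ) k = ((0 : K) : ∀ _ : ℕ, ℂ) k
  rw [B_apply, ← mul_assoc, c_mul_succ, zero_mul]
  simp

lemma bdd_of_zero {T : K →ₗ.[ℂ] K} (h : ∀ x : T.domain, T x = 0) : IsBddOp T := by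
  refine ⟨1, zero_le_one, fun x => ?_⟩
  rw [h x, norm_zero, one_mul]
  exact norm_nonneg _

/-! unboundedness -/

lemma not_bdd_of_singles (T : K →ₗ.[ℂ] K)
    (h : ∀ n : ℕ, ∃ x : T.domain, ‖(x : K)‖ = 1 ∧ (2 * n + 1 : ℝ) ≤ ‖T x‖) :
    ¬ IsBddOp T := by
  rintro ⟨C, hC0, hC⟩
  obtain ⟨x, hx1, hx2⟩ := h ⌈C⌉₊
  have h1 := hC x
  rw [hx1, mul_one] at h1
  have h2 := Nat.le_ceil C
  have h3 : (0:ℝ) ≤ (⌈C⌉₊ : ℝ) := Nat.cast_nonneg _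
  linarith

lemma B_single_odd (n : ℕ) (h : (lp.single 2 (2 * n + 1) 1 : K) ∈ B.domain) :
    B ⟨lp.single 2 (2 * n + 1) 1, h⟩ = lp.single 2 (2 * n) (c (2 * n + 1)) := by
  apply ext_K
  intro k
  rw [B_apply, single_coord, single_coord]
  rcases eq_or_ne k (2 * n) with rfl | hk
  · rw [if_pos rfl, if_pos rfl, mul_one]
  · rw [if_neg (by omega), if_neg hk, mul_zero]

lemma unbdd_B : ¬ IsBddOp B := by
  apply not_bdd_of_singles
  intro n
  refine ⟨⟨lp.single 2 (2 * n + 1) 1, single_mem_B _ _⟩, by rw [norm_single]; simp, ?_⟩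
  rw [B_single_odd n, norm_single, c_odd]
  rw [Complex.norm_real, Real.norm_natCast]
  push_cast
  linarith

/-! positivity of P -/

lemma pos_P : ∀ x : P.domain, 0 ≤ (inner ℂ (P x) ((x : K)) : ℂ).re ∧
    (inner ℂ (P x) ((x : K)) : ℂ).im = 0 := by
  intro x
  have hterm : ∀ k, (inner ℂ (((P x : K) : ∀ _ : ℕ, ℂ) k) (((x : K) : ∀ _ : ℕ, ℂ) k) : ℂ)
      = ((creal k * Complex.normSq (((x : K) : ∀ _ : ℕ, ℂ) k) : ℝ) : ℂ) := by
    intro k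
    rw [RCLike.inner_apply, P_apply]
    rw [map_mul, c_conj]
    unfold c
    rw [Complex.ofReal_mul, Complex.normSq_eq_conj_mul_self]
    ring
  have : (inner ℂ (P x : K) ((x : K)) : ℂ)
      = ((∑' k, creal k * Complex.normSq (((x : K) : ∀ _ : ℕ, ℂ) k) : ℝ) : ℂ) := by
    rw [lp.inner_eq_tsum, Complex.ofReal_tsum]
    exact tsum_congr hterm
  rw [this]
  constructor
  · rw [Complex.ofReal_re]
    apply tsum_nonneg
    intro k
    exact mul_nonneg (creal_nonneg k) (Complex.normSq_nonneg _)
  · exact Complex.ofReal_im _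

/-! singles under P and B -/

lemma P_single (k : ℕ) :
    P ⟨lp.single 2 k 1, single_mem_P k 1⟩ = lp.single 2 k (c k) := by
  apply ext_K
  intro j
  rw [P_apply, single_coord, single_coord]
  rcases eq_or_ne j k with rfl | hj
  · rw [if_pos rfl, if_pos rfl, mul_one]
  · rw [if_neg hj, if_neg hj, mul_zero]

lemma B_single_zero : B ⟨lp.single 2 0 1, single_mem_B 0 1⟩ = 0 := by
  apply ext_K
  intro j
  rw [B_apply, single_coord]
  rw [if_neg (by omega)]
  simp

lemma B_single_succ (m : ℕ) :
    B ⟨lp.single 2 (m + 1) 1, single_mem_B (m + 1) 1⟩ = lp.single 2 m (c (m + 1)) := by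
  apply ext_K
  intro j
  rw [B_apply, single_coord, single_coord]
  rcases eq_or_ne j m with rfl | hj
  · rw [if_pos rfl, if_pos rfl, mul_one]
  · rw [if_neg (by omega), if_neg hj, mul_zero]

/-! P is self-adjoint -/

lemma symm_P : P.IsFormalAdjoint P := by
  intro x y
  rw [lp.inner_eq_tsum, lp.inner_eq_tsum]
  apply tsum_congr
  intro k
  rw [RCLike.inner_apply, RCLike.inner_apply, P_apply, P_apply, map_mul, c_conj]
  ring

lemma coords_Padj (y : P†.domain) (k : ℕ) :
    ((P† y : K) : ∀ _ : ℕ, ℂ) k = c k * ((y : K) : ∀ _ : ℕ, ℂ) k := by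
  have h1 := LinearPMap.adjoint_isFormalAdjoint dense_P y ⟨lp.single 2 k 1, single_mem_P k 1⟩
  rw [P_single, lp.inner_single_right, lp.inner_single_right, RCLike.inner_apply,
    RCLike.inner_apply, one_mul] at h1
  have h2 := congrArg (starRingEnd ℂ) h1
  rw [Complex.conj_conj, map_mul, Complex.conj_conj, c_conj] at h2
  rw [h2]

lemma adj_P : P† = P := by
  apply le_antisymm
  · refine ⟨fun y hy => ?_, fun x y' hxy => ?_⟩
    · rw [mem_P_domain]
      have : (fun k => c k * (y : ∀ _ : ℕ, ℂ) k) = ((P† ⟨y, hy⟩ : K) : ∀ _ : ℕ, ℂ) := by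
        funext k
        exact (coords_Padj ⟨y, hy⟩ k).symm
      rw [this]
      exact lp.memℓp _
    · apply ext_K
      intro k
      rw [coords_Padj, P_apply, hxy]
  · exact LinearPMap.IsFormalAdjoint.le_adjoint dense_P symm_P

/-! B† = A -/

lemma fa_BA : B.IsFormalAdjoint A := by
  intro x y
  rw [lp.inner_eq_tsum, lp.inner_eq_tsum]
  rw [Summable.tsum_eq_zero_add (f := fun i => inner ℂ (((x : K) : ∀ _ : ℕ, ℂ) i) (((A y : K) : ∀ _ : ℕ, ℂ) i)) (lp.summable_inner (G := fun _ : ℕ => ℂ) (x : K) (A y : K))]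
  have h0 : (inner ℂ (((x : K) : ∀ _ : ℕ, ℂ) 0) (((A y : K) : ∀ _ : ℕ, ℂ) 0) : ℂ) = 0 := by
    rw [RCLike.inner_apply, A_apply, c_zero, zero_mul, zero_mul]
  rw [h0, zero_add]
  apply tsum_congr
  intro k
  rw [RCLike.inner_apply, RCLike.inner_apply, B_apply, A_apply,
    Nat.add_sub_cancel, map_mul, c_conj]
  ring

lemma coords_Badj (y : B†.domain) (k : ℕ) :
    ((B† y : K) : ∀ _ : ℕ, ℂ) k = c k * ((y : K) : ∀ _ : ℕ, ℂ) (k - 1) := by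
  cases k with
  | zero =>
    have h1 := LinearPMap.adjoint_isFormalAdjoint dense_B y ⟨lp.single 2 0 1, single_mem_B 0 1⟩
    rw [B_single_zero, lp.inner_single_right, RCLike.inner_apply, one_mul, inner_zero_right] at h1
    have h2 : ((B† y : K) : ∀ _ : ℕ, ℂ) 0 = 0 := by
      simpa using congrArg (starRingEnd ℂ) h1
    rw [h2, c_zero, zero_mul]
  | succ m =>
    have h1 := LinearPMap.adjoint_isFormalAdjoint dense_B y
      ⟨lp.single 2 (m + 1) 1, single_mem_B (m + 1) 1⟩
    rw [B_single_succ, lp.inner_single_right, lp.inner_single_right, RCLike.inner_apply,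
      RCLike.inner_apply, one_mul] at h1
    have h2 := congrArg (starRingEnd ℂ) h1
    rw [Complex.conj_conj, map_mul, Complex.conj_conj, c_conj] at h2
    rw [h2]
    rfl

lemma adj_B : B† = A := by
  apply le_antisymm
  · refine ⟨fun y hy => ?_, fun x y' hxy => ?_⟩
    · rw [mem_A_domain]
      have : (fun k => c k * (y : ∀ _ : ℕ, ℂ) (k - 1)) = ((B† ⟨y, hy⟩ : K) : ∀ _ : ℕ, ℂ) := by
        funext k
        exact (coords_Badj ⟨y, hy⟩ k).symm
      rw [this]
      exact lp.memℓp _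
    · apply ext_K
      intro k
      rw [coords_Badj, A_apply, hxy]
  · exact LinearPMap.IsFormalAdjoint.le_adjoint dense_B fa_BA

/-! pComp P P = pComp A B -/

lemma mem_P_iff_mem_B {x : K} : x ∈ P.domain ↔ x ∈ B.domain := by
  rw [mem_P_domain, mem_B_domain, memℓp_iff, memℓp_iff]
  exact (summable_nat_add_iff 1).symm

lemma fun_eq (x : K) : (fun k => c k * (c k * (x : ∀ _ : ℕ, ℂ) k))
    = (fun k => c k * (c (k - 1 + 1) * (x : ∀ _ : ℕ, ℂ) (k - 1 + 1))) := by
  funext k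
  cases k with
  | zero => rw [c_zero, zero_mul, zero_mul]
  | succ m => rfl

lemma comp_eq : pComp P P = pComp A B := by
  apply LinearPMap.ext
  · ext x
    rw [mem_pComp_domain, mem_pComp_domain]
    constructor
    · rintro ⟨h1, h2⟩
      refine ⟨mem_P_iff_mem_B.mp h1, ?_⟩
      have h2' : Memℓp (fun k => c k * (c k * (x : ∀ _ : ℕ, ℂ) k)) 2 := h2
      have h3 : Memℓp (fun k => c k * (c (k - 1 + 1) * (x : ∀ _ : ℕ, ℂ) (k - 1 + 1))) 2 := by
        rw [← fun_eq]
        exact h2'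
      exact h3
    · rintro ⟨g1, g2⟩
      refine ⟨mem_P_iff_mem_B.mpr g1, ?_⟩
      have g2' : Memℓp (fun k => c k * (c (k - 1 + 1) * (x : ∀ _ : ℕ, ℂ) (k - 1 + 1))) 2 := g2
      have g3 : Memℓp (fun k => c k * (c k * (x : ∀ _ : ℕ, ℂ) k)) 2 := by
        rw [fun_eq]
        exact g2'
      exact g3
  · intro x₀ hf hg
    let x : (pComp P P).domain := ⟨x₀, hf⟩
    let y : (pComp A B).domain := ⟨x₀, hg⟩
    have hxy : (x : K) = y := rfl
    show pComp P P x = pComp A B y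
    rw [pComp_apply', pComp_apply']
    apply ext_K
    intro k
    have hco : ∀ j, ((x : K) : ∀ _ : ℕ, ℂ) j = ((y : K) : ∀ _ : ℕ, ℂ) j := by
      intro j
      rw [hxy]
    show c k * (c k * ((x : K) : ∀ _ : ℕ, ℂ) k)
        = c k * (c (k - 1 + 1) * ((y : K) : ∀ _ : ℕ, ℂ) (k - 1 + 1))
    cases k with
    | zero => rw [c_zero, zero_mul, zero_mul]
    | succ m =>
      rw [hco (m + 1)]
      rfl

/-! pComp B P : closed and unbounded -/

lemma graph_BP : ((pComp B P).graph : Set (K × K))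
    = {z : K × K | ∀ k, (z.2 : ∀ _ : ℕ, ℂ) k
        = (c (k + 1) * c (k + 1)) * (z.1 : ∀ _ : ℕ, ℂ) (k + 1)} := by
  ext z
  rw [SetLike.mem_coe, LinearPMap.mem_graph_iff]
  constructor
  · rintro ⟨v, h1, h2⟩ k
    rw [← h2, ← h1, pComp_apply']
    show c (k + 1) * (c (k + 1) * ((v : K) : ∀ _ : ℕ, ℂ) (k + 1)) = _
    rw [mul_assoc]
  · intro h
    have h1 : z.1 ∈ P.domain := by
      rw [mem_P_domain, memℓp_iff]
      rw [← summable_nat_add_iff 1]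
      have hy := memℓp_iff.mp (lp.memℓp z.2)
      refine Summable.of_nonneg_of_le (fun k => by positivity) (fun k => ?_) hy
      rw [h k]
      apply Real.rpow_le_rpow (norm_nonneg _) ?_ (by norm_num)
      rw [norm_mul, norm_mul]
      exact mul_le_mul_of_nonneg_right (norm_c_le (k + 1)) (norm_nonneg _)
    have h2 : P ⟨z.1, h1⟩ ∈ B.domain := by
      rw [mem_B_domain]
      have : (fun k => c (k + 1) * ((P ⟨z.1, h1⟩ : K) : ∀ _ : ℕ, ℂ) (k + 1))
          = (z.2 : ∀ _ : ℕ, ℂ) := by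
        funext k
        rw [P_apply, ← mul_assoc]
        exact (h k).symm
      rw [this]
      exact lp.memℓp z.2
    refine ⟨⟨z.1, mem_pComp_domain.mpr ⟨h1, h2⟩⟩, rfl, ?_⟩
    apply ext_K
    intro k
    rw [pComp_apply']
    show c (k + 1) * (c (k + 1) * (z.1 : ∀ _ : ℕ, ℂ) (k + 1)) = _
    rw [← mul_assoc]
    exact (h k).symm

lemma closed_BP : (pComp B P).IsClosed := by
  unfold LinearPMap.IsClosed
  rw [graph_BP]
  exact isClosed_coordSet _

lemma single_mem_BP (i : ℕ) (a : ℂ) : (lp.single 2 i a : K) ∈ (pComp B P).domain := by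
  refine mem_pComp_domain.mpr ⟨single_mem_P i a, ?_⟩
  rw [mem_B_domain]
  apply memℓp_of_finite
  apply (Set.finite_Iic i).subset
  intro k hk
  simp only [Set.mem_setOf_eq] at hk
  by_contra hki
  simp only [Set.mem_Iic, not_le] at hki
  have : ((P ⟨(lp.single 2 i a : K), single_mem_P i a⟩ : K) : ∀ _ : ℕ, ℂ) (k + 1) = 0 := by
    rw [P_apply, single_coord, if_neg (by omega), mul_zero]
  rw [this, mul_zero] at hk
  exact hk rfl

lemma BP_single_odd (n : ℕ) :
    pComp B P ⟨lp.single 2 (2 * n + 1) 1, single_mem_BP (2 * n + 1) 1⟩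
      = lp.single 2 (2 * n) (c (2 * n + 1) * c (2 * n + 1)) := by
  apply ext_K
  intro k
  rw [pComp_apply']
  show c (k + 1) * (c (k + 1) * ((lp.single 2 (2 * n + 1) 1 : K) : ∀ _ : ℕ, ℂ) (k + 1)) = _
  rw [single_coord, single_coord]
  rcases eq_or_ne k (2 * n) with rfl | hk
  · rw [if_pos rfl, if_pos rfl, mul_one]
  · rw [if_neg (by omega), if_neg hk, mul_zero, mul_zero]

lemma unbdd_BP : ¬ IsBddOp (pComp B P) := by
  apply not_bdd_of_singles
  intro n
  refine ⟨⟨lp.single 2 (2 * n + 1) 1, single_mem_BP _ _⟩, by rw [norm_single]; simp, ?_⟩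
  rw [BP_single_odd n, norm_single, norm_mul, c_odd, Complex.norm_real, Real.norm_natCast]
  push_cast
  nlinarith [Nat.cast_nonneg (α := ℝ) n]
end Aux

/-- There exist a complex Hilbert space `H`, a densely defined closed unbounded operator `B`,
and a positive self-adjoint `P` with `P ∘ P = B† ∘ B` (i.e. `P = |B|`), such that `B ∘ B` is
bounded on its dense domain, `P ∘ B` is bounded on its dense domain, while `B ∘ P` is
unbounded and closed. -/
theorem stmt_0 :
    ∃ (𝓗 : HilbertC) (B P : 𝓗.carrier →ₗ.[ℂ] 𝓗.carrier),
      Dense (B.domain : Set 𝓗.carrier) ∧ B.IsClosed ∧ ¬ IsBddOp B ∧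
      IsPosOp P ∧ P† = P ∧ pComp P P = pComp (B†) B ∧
      Dense ((pComp B B).domain : Set 𝓗.carrier) ∧ IsBddOp (pComp B B) ∧
      Dense ((pComp P B).domain : Set 𝓗.carrier) ∧ IsBddOp (pComp P B) ∧
      ¬ IsBddOp (pComp B P) ∧ (pComp B P).IsClosed := by
  refine ⟨⟨Aux.K⟩, Aux.B, Aux.P, Aux.dense_B, Aux.closed_B, Aux.unbdd_B, Aux.pos_P, Aux.adj_P,
    ?_, Aux.dense_BB, Aux.bdd_of_zero Aux.BB_zero, Aux.dense_PB, Aux.bdd_of_zero Aux.PB_zero,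
    Aux.unbdd_BP, Aux.closed_BP⟩
  rw [Aux.adj_B]
  exact Aux.comp_eq
end
end

section
/- There exist a complex Hilbert space H and two unbounded self-adjoint operators A and B on H with D(A) = D(B), such that A ∘ A − B ∘ B (on its natural domain) is bounded, while A ∘ B − B ∘ A is unbounded. -/
/- Unbounded (partially defined) operators on a complex Hilbert space are modelled by
Mathlib's `LinearPMap` (`H →ₗ.[ℂ] H`).  `T†` is the adjoint, `T.IsClosed` means the graph
of `T` is closed, and `f - g` is the difference with domain `D(f) ⊓ D(g)`. -/

noncomputable section

open LinearPMap

open scoped ENNReal NNReal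


section pCompLemmas
variable {R E F G : Type*} [Ring R] [AddCommGroup E] [Module R E]
    [AddCommGroup F] [Module R F] [AddCommGroup G] [Module R G]
    (S : F →ₗ.[R] G) (T : E →ₗ.[R] F)

theorem pComp_mem {x : E} (hx : x ∈ T.domain) (hTx : T ⟨x, hx⟩ ∈ S.domain) :
    x ∈ (pComp S T).domain :=
  ⟨⟨x, hx⟩, hTx, rfl⟩

theorem pComp_apply {x : E} (hx : x ∈ T.domain) (hTx : T ⟨x, hx⟩ ∈ S.domain)
    (h : x ∈ (pComp S T).domain) : pComp S T ⟨x, h⟩ = S ⟨T ⟨x, hx⟩, hTx⟩ := by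
  have key : (Submodule.equivMapOfInjective T.domain.subtype T.domain.injective_subtype
      (S.domain.comap T.toFun)).symm ⟨x, h⟩ = ⟨⟨x, hx⟩, hTx⟩ := by
    rw [LinearEquiv.symm_apply_eq]
    rfl
  show S.toFun ((T.toFun.restrict _) ((Submodule.equivMapOfInjective T.domain.subtype
      T.domain.injective_subtype (S.domain.comap T.toFun)).symm ⟨x, h⟩)) = _
  rw [key]
  rfl

end pCompLemmas

section Wop
variable {α : Type} [DecidableEq α]

abbrev Hl (α : Type) : Type := lp (fun _ : α => ℂ) 2

theorem memℓp_two_iff {f : α → ℂ} : Memℓp f 2 ↔ Summable fun i => ‖f i‖ ^ (2 : ℝ≥0∞).toReal :=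
  memℓp_gen_iff (by norm_num)

/-- The domain: `x` with `(w i * x i) ∈ ℓ²`. -/
def Dom (w : α → ℝ) : Submodule ℂ (Hl α) where
  carrier := {x | Memℓp (fun i => (w i : ℂ) * x i) 2}
  zero_mem' := by
    have : (fun i => (w i : ℂ) * (0 : Hl α) i) = 0 := by
      funext i; simp
    show Memℓp (fun i => (w i : ℂ) * (0 : Hl α) i) 2
    rw [this]
    exact zero_memℓp
  add_mem' := by
    intro x y hx hy
    have : (fun i => (w i : ℂ) * (x + y) i)
        = (fun i => (w i : ℂ) * x i) + fun i => (w i : ℂ) * y i := by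
      funext i; simp [mul_add]
    simp only [Set.mem_setOf_eq, this]
    exact hx.add hy
  smul_mem' := by
    intro c x hx
    have : (fun i => (w i : ℂ) * (c • x) i) = c • fun i => (w i : ℂ) * x i := by
      funext i; simp [lp.coeFn_smul]; ring
    simp only [Set.mem_setOf_eq, this]
    exact hx.const_smul c

theorem mem_Dom_iff {w : α → ℝ} {x : Hl α} :
    x ∈ Dom w ↔ Memℓp (fun i => (w i : ℂ) * x i) 2 := Iff.rfl

theorem wop_memℓp (c : α → ℝ) (σ : Equiv.Perm α) (w : α → ℝ)
    (h2 : ∀ i, |c i| = w (σ i)) {x : Hl α} (hx : x ∈ Dom w) :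
    Memℓp (fun i => (c i : ℂ) * x (σ i)) 2 := by
  rw [mem_Dom_iff, memℓp_two_iff] at hx
  rw [memℓp_two_iff]
  have := (Equiv.summable_iff σ (f := fun i => ‖(w i : ℂ) * x i‖ ^ (2 : ℝ≥0∞).toReal)).2 hx
  convert this using 2 with i
  simp only [Function.comp_apply, norm_mul, Complex.norm_real]
  rw [← h2 i]
  simp [abs_abs]

/-- Weighted permutation operator `x ↦ (c i * x (σ i))_i` with domain `Dom w`. -/
def wop (c : α → ℝ) (σ : Equiv.Perm α) (w : α → ℝ)
    (h2 : ∀ i, |c i| = w (σ i)) : Hl α →ₗ.[ℂ] Hl α where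
  domain := Dom w
  toFun :=
    { toFun := fun x => ⟨fun i => (c i : ℂ) * (x : Hl α) (σ i), wop_memℓp c σ w h2 x.2⟩
      map_add' := by
        intro x y
        apply lp.ext
        funext i
        simp [mul_add]
        rfl
      map_smul' := by
        intro d x
        apply lp.ext
        funext i
        simp [lp.coeFn_smul]
        ring }

theorem wop_apply (c : α → ℝ) (σ : Equiv.Perm α) (w : α → ℝ)
    (h2 : ∀ i, |c i| = w (σ i)) (x : (wop c σ w h2).domain) (i : α) :
    (wop c σ w h2 x : Hl α) i = (c i : ℂ) * (x : Hl α) (σ i) := rfl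

end Wop

section Wop2
variable {α : Type} [DecidableEq α]

theorem single_mem_Dom (w : α → ℝ) (j : α) (a : ℂ) : (lp.single 2 j a : Hl α) ∈ Dom w := by
  rw [mem_Dom_iff]
  have h : (fun i => (w i : ℂ) * (lp.single 2 j a : Hl α) i)
      = ((lp.single 2 j ((w j : ℂ) * a) : Hl α) : ∀ _ : α, ℂ) := by
    funext i
    by_cases h : i = j
    · subst h; simp [lp.single_apply_self]
    · simp [lp.single_apply_ne _ _ _ h, Pi.single_apply, h]
  rw [h]
  exact lp.memℓp _

theorem wop_single (c : α → ℝ) (σ : Equiv.Perm α) (w : α → ℝ)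
    (h2 : ∀ i, |c i| = w (σ i)) (h1 : ∀ i, σ (σ i) = i) (j : α) (a : ℂ)
    (hm : (lp.single 2 j a : Hl α) ∈ (wop c σ w h2).domain) :
    wop c σ w h2 ⟨lp.single 2 j a, hm⟩ = lp.single 2 (σ j) ((c (σ j) : ℂ) * a) := by
  apply lp.ext
  funext k
  rw [wop_apply]
  by_cases h : k = σ j
  · subst h
    rw [h1 j, lp.single_apply_self, lp.single_apply_self]
  · have hk : σ k ≠ j := by
      intro hh
      apply h
      rw [← hh, h1 k]
    rw [lp.single_apply_ne _ _ _ hk, lp.single_apply_ne _ _ _ h, mul_zero]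

theorem dense_Dom (w : α → ℝ) : Dense ((Dom w : Submodule ℂ (Hl α)) : Set (Hl α)) := by
  intro x
  have hsum := lp.hasSum_single (E := fun _ : α => ℂ) (p := 2) (by norm_num) x
  refine mem_closure_of_tendsto hsum (Filter.Eventually.of_forall fun s => ?_)
  exact Submodule.sum_mem _ fun i _ => single_mem_Dom w i (x i)

theorem wop_symm (c : α → ℝ) (σ : Equiv.Perm α) (w : α → ℝ)
    (h2 : ∀ i, |c i| = w (σ i)) (h1 : ∀ i, σ (σ i) = i) (hc : ∀ i, c (σ i) = c i) :
    (wop c σ w h2).IsFormalAdjoint (wop c σ w h2) := by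
  intro x y
  rw [lp.inner_eq_tsum, lp.inner_eq_tsum]
  have := (Equiv.tsum_eq σ (fun i => (inner ℂ ((wop c σ w h2 x : Hl α) i)
      ((y : Hl α) i) : ℂ))).symm
  rw [this]
  refine tsum_congr fun j => ?_
  rw [wop_apply, wop_apply]
  simp only [RCLike.inner_apply, h1, hc, map_mul, Complex.conj_ofReal]
  ring

end Wop2

section Adj
variable {α : Type} [DecidableEq α]

set_option maxHeartbeats 1000000 in
theorem wop_adjoint_dom_le (c : α → ℝ) (σ : Equiv.Perm α) (w : α → ℝ)
    (h2 : ∀ i, |c i| = w (σ i)) (h1 : ∀ i, σ (σ i) = i) (hc : ∀ i, c (σ i) = c i)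
    (hw : ∀ i, |c i| = w i) :
    ((wop c σ w h2)†).domain ≤ (wop c σ w h2).domain := by
  set T := wop c σ w h2 with hT
  intro y hy
  set φ := T.adjointDomainMkCLM ⟨y, hy⟩ with hφ
  set f : α → ℂ := fun j => (c (σ j) : ℂ) * (y : Hl α) (σ j) with hf
  set u : α → T.domain := fun j => ⟨lp.single 2 j (f j), single_mem_Dom w j (f j)⟩ with hu
  set g : α → ℝ := fun i => (c i) ^ 2 * Complex.normSq ((y : Hl α) i) with hg
  have hg0 : ∀ i, 0 ≤ g i := fun i => mul_nonneg (sq_nonneg _) (Complex.normSq_nonneg _)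
  have hφu : ∀ j, φ (u j) = ((g (σ j) : ℝ) : ℂ) := by
    intro j
    rw [hφ, adjointDomainMkCLM_apply]
    have hTu : T (u j) = lp.single 2 (σ j) ((c (σ j) : ℂ) * f j) :=
      wop_single c σ w h2 h1 j (f j) _
    rw [hTu, lp.inner_single_right]
    simp only [RCLike.inner_apply, hf, hg]
    push_cast
    rw [← Complex.mul_conj]
    ring
  have key : ∀ S : Finset α, ∑ i ∈ S, g i ≤ ‖φ‖ ^ 2 := by
    intro S
    set S' := S.image σ with hS'
    set X : T.domain := ∑ j ∈ S', u j with hX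
    have hsum0 : (0 : ℝ) ≤ ∑ i ∈ S, g i := Finset.sum_nonneg fun i _ => hg0 i
    have hXcoe : (X : Hl α) = ∑ j ∈ S', lp.single 2 j (f j) := by
      rw [hX]
      push_cast
      rfl
    have hφX : φ X = ((∑ i ∈ S, g i : ℝ) : ℂ) := by
      rw [hX, map_sum]
      rw [Finset.sum_image (fun a _ b _ h => σ.injective h)]
      push_cast
      refine Finset.sum_congr rfl fun i _ => ?_
      rw [hφu (σ i), h1 i]
    have hXnorm : ‖X‖ ^ (2 : ℕ) = ∑ i ∈ S, g i := by
      have hn : ‖X‖ = ‖(X : Hl α)‖ := rfl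
      rw [hXcoe] at hn
      have hns := lp.norm_sum_single (p := 2) (by norm_num) f S'
      rw [show ((2 : ℝ≥0∞).toReal) = (2 : ℝ) by norm_num] at hns
      rw [hn, ← Real.rpow_two, hns, hS']
      rw [Finset.sum_image (fun a _ b _ h => σ.injective h)]
      refine Finset.sum_congr rfl fun i _ => ?_
      simp only [hf, hg, h1, hc]
      rw [Real.rpow_two, norm_mul, mul_pow, Complex.norm_real, Real.norm_eq_abs, sq_abs,
        Complex.sq_norm]
    have hb := φ.le_opNorm X
    rw [hφX, Complex.norm_real, Real.norm_eq_abs, abs_of_nonneg hsum0] at hb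
    nlinarith [hb, hXnorm, norm_nonneg X, norm_nonneg φ]
  rw [hT]
  show y ∈ Dom w
  rw [mem_Dom_iff]
  refine memℓp_gen' (C := ‖φ‖ ^ 2) fun S => ?_
  calc ∑ i ∈ S, ‖(w i : ℂ) * (y : Hl α) i‖ ^ (2 : ℝ≥0∞).toReal
      = ∑ i ∈ S, g i := by
        refine Finset.sum_congr rfl fun i _ => ?_
        rw [show ((2 : ℝ≥0∞).toReal) = (2 : ℝ) by norm_num, Real.rpow_two]
        rw [norm_mul, mul_pow, Complex.norm_real, Real.norm_eq_abs, ← hw i, sq_abs, sq_abs,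
          Complex.sq_norm]
    _ ≤ ‖φ‖ ^ 2 := key S

theorem wop_isSelfAdjoint (c : α → ℝ) (σ : Equiv.Perm α) (w : α → ℝ)
    (h2 : ∀ i, |c i| = w (σ i)) (h1 : ∀ i, σ (σ i) = i) (hc : ∀ i, c (σ i) = c i)
    (hw : ∀ i, |c i| = w i) :
    (wop c σ w h2)† = wop c σ w h2 := by
  have hd : Dense ((wop c σ w h2).domain : Set (Hl α)) := dense_Dom w
  have hle : wop c σ w h2 ≤ (wop c σ w h2)† :=
    (wop_symm c σ w h2 h1 hc).le_adjoint hd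
  exact (eq_of_le_of_domain_eq hle
    (le_antisymm hle.1 (wop_adjoint_dom_le c σ w h2 h1 hc hw))).symm

end Adj

section Concrete

abbrev Idx : Type := ℕ × Bool

def wgt : Idx → ℝ := fun p => p.1

def cA : Idx → ℝ := fun p => if p.2 then (p.1 : ℝ) else -(p.1 : ℝ)

def permA : Equiv.Perm Idx := Equiv.refl Idx

def cB : Idx → ℝ := fun p => p.1

def permB : Equiv.Perm Idx :=
  Function.Involutive.toPerm (fun p => (p.1, !p.2)) (fun p => by simp)

theorem permB_apply (p : Idx) : permB p = (p.1, !p.2) := rfl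

theorem h2A : ∀ i, |cA i| = wgt (permA i) := by
  rintro ⟨n, b⟩
  cases b <;> simp [cA, wgt, permA]

theorem h2B : ∀ i, |cB i| = wgt (permB i) := by
  rintro ⟨n, b⟩
  simp [cB, wgt, permB_apply]

def opA : Hl Idx →ₗ.[ℂ] Hl Idx := wop cA permA wgt h2A

def opB : Hl Idx →ₗ.[ℂ] Hl Idx := wop cB permB wgt h2B

theorem opA_selfAdjoint : opA† = opA :=
  wop_isSelfAdjoint cA permA wgt h2A (fun _ => rfl) (fun _ => rfl)
    (by rintro ⟨n, b⟩; cases b <;> simp [cA, wgt])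

theorem opB_selfAdjoint : opB† = opB :=
  wop_isSelfAdjoint cB permB wgt h2B
    (by rintro ⟨n, b⟩; simp [permB_apply])
    (by rintro ⟨n, b⟩; simp [cB, permB_apply])
    (by rintro ⟨n, b⟩; simp [cB, wgt])

theorem norm_lp_single (j : Idx) (a : ℂ) : ‖(lp.single 2 j a : Hl Idx)‖ = ‖a‖ :=
  lp.norm_single (E := fun _ : Idx => ℂ) (p := 2) (by norm_num) j a

theorem not_bdd {T : Hl Idx →ₗ.[ℂ] Hl Idx}
    (h : ∀ C : ℝ, ∃ x : T.domain, ‖(x : Hl Idx)‖ = 1 ∧ C < ‖T x‖) : ¬ IsBddOp T := by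
  rintro ⟨C, _, hC⟩
  obtain ⟨x, hx1, hx2⟩ := h C
  have := hC x
  rw [hx1, mul_one] at this
  linarith

theorem opA_unbounded : ¬ IsBddOp opA := by
  refine not_bdd fun C => ?_
  obtain ⟨n, hn⟩ := exists_nat_gt (max C 0)
  refine ⟨⟨lp.single 2 (n, true) 1, single_mem_Dom wgt _ _⟩, ?_, ?_⟩
  · rw [norm_lp_single]; simp
  · have := wop_single cA permA wgt h2A (fun _ => rfl) (n, true) 1
      (single_mem_Dom wgt _ _)
    rw [show opA ⟨lp.single 2 (n, true) 1, single_mem_Dom wgt _ _⟩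
        = wop cA permA wgt h2A ⟨lp.single 2 (n, true) 1, single_mem_Dom wgt _ _⟩ from rfl, this]
    rw [norm_lp_single]
    simp only [permA, Equiv.refl_apply, cA, if_true, mul_one]
    rw [Complex.norm_real, Real.norm_eq_abs, Nat.abs_cast]
    exact lt_of_le_of_lt (le_max_left C 0) hn

theorem opB_unbounded : ¬ IsBddOp opB := by
  refine not_bdd fun C => ?_
  obtain ⟨n, hn⟩ := exists_nat_gt (max C 0)
  refine ⟨⟨lp.single 2 (n, true) 1, single_mem_Dom wgt _ _⟩, ?_, ?_⟩
  · rw [norm_lp_single]; simp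
  · have := wop_single cB permB wgt h2B (by rintro ⟨m, b⟩; simp [permB_apply]) (n, true) 1
      (single_mem_Dom wgt _ _)
    rw [show opB ⟨lp.single 2 (n, true) 1, single_mem_Dom wgt _ _⟩
        = wop cB permB wgt h2B ⟨lp.single 2 (n, true) 1, single_mem_Dom wgt _ _⟩ from rfl, this]
    rw [norm_lp_single]
    simp only [permB_apply, cB, mul_one]
    rw [Complex.norm_real, Real.norm_eq_abs, Nat.abs_cast]
    exact lt_of_le_of_lt (le_max_left C 0) hn

end Concrete

section Final

theorem pComp_dom_elim {R E F G : Type*} [Ring R] [AddCommGroup E] [Module R E]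
    [AddCommGroup F] [Module R F] [AddCommGroup G] [Module R G]
    {S : F →ₗ.[R] G} {T : E →ₗ.[R] F} {x : E} (h : x ∈ (pComp S T).domain) :
    ∃ hx : x ∈ T.domain, T ⟨x, hx⟩ ∈ S.domain := by
  rcases h with ⟨y, hy, rfl⟩
  exact ⟨y.2, hy⟩

theorem opA_coord (x : opA.domain) (i : Idx) :
    (opA x : Hl Idx) i = (cA i : ℂ) * (x : Hl Idx) (permA i) := rfl

theorem opB_coord (x : opB.domain) (i : Idx) :
    (opB x : Hl Idx) i = (cB i : ℂ) * (x : Hl Idx) (permB i) := rfl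

theorem sq_diff_bounded : IsBddOp (pComp opA opA - pComp opB opB) := by
  refine ⟨0, le_refl 0, fun x => ?_⟩
  obtain ⟨hx1, hAx⟩ := pComp_dom_elim x.2.1
  obtain ⟨hx2, hBx⟩ := pComp_dom_elim x.2.2
  have e1 : pComp opA opA ⟨(x : Hl Idx), x.2.1⟩ = opA ⟨opA ⟨(x : Hl Idx), hx1⟩, hAx⟩ :=
    pComp_apply _ _ hx1 hAx _
  have e2 : pComp opB opB ⟨(x : Hl Idx), x.2.2⟩ = opB ⟨opB ⟨(x : Hl Idx), hx2⟩, hBx⟩ :=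
    pComp_apply _ _ hx2 hBx _
  have heq : opA ⟨opA ⟨(x : Hl Idx), hx1⟩, hAx⟩ = opB ⟨opB ⟨(x : Hl Idx), hx2⟩, hBx⟩ := by
    apply lp.ext
    funext i
    rw [opA_coord, opA_coord, opB_coord, opB_coord]
    obtain ⟨m, b⟩ := i
    cases b <;> simp [cA, cB, permA, permB_apply] <;> ring
  rw [LinearPMap.sub_apply, e1, e2, heq, sub_self]
  simp

theorem lp_single_sub (j : Idx) (a b : ℂ) :
    (lp.single 2 j a : Hl Idx) - lp.single 2 j b = lp.single 2 j (a - b) := by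
  apply lp.ext
  funext k
  rw [lp.coeFn_sub, Pi.sub_apply]
  by_cases h : k = j
  · subst h; rw [lp.single_apply_self, lp.single_apply_self, lp.single_apply_self]
  · rw [lp.single_apply_ne _ _ _ h, lp.single_apply_ne _ _ _ h, lp.single_apply_ne _ _ _ h,
      sub_zero]

theorem opA_congr {x y : opA.domain} (h : (x : Hl Idx) = y) : opA x = opA y := by
  congr 1
  exact Subtype.ext h

theorem opB_congr {x y : opB.domain} (h : (x : Hl Idx) = y) : opB x = opB y := by
  congr 1
  exact Subtype.ext h

theorem comm_unbounded : ¬ IsBddOp (pComp opA opB - pComp opB opA) := by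
  have hinvB : ∀ i, permB (permB i) = i := by rintro ⟨m, b⟩; simp [permB_apply]
  refine not_bdd fun C => ?_
  obtain ⟨n, hn⟩ := exists_nat_gt (max C 0)
  set x0 : Hl Idx := lp.single 2 (n, false) 1 with hx0
  have hxA : x0 ∈ opA.domain := single_mem_Dom wgt _ _
  have hxB : x0 ∈ opB.domain := single_mem_Dom wgt _ _
  have hBx0 : opB ⟨x0, hxB⟩ = lp.single 2 (n, true) (((n : ℝ) : ℂ)) := by
    rw [show opB ⟨x0, hxB⟩ = wop cB permB wgt h2B ⟨x0, hxB⟩ from rfl,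
      wop_single cB permB wgt h2B hinvB (n, false) 1 hxB]
    norm_num [cB, permB_apply]
  have hAx0 : opA ⟨x0, hxA⟩ = lp.single 2 (n, false) ((-(n : ℝ) : ℂ)) := by
    rw [show opA ⟨x0, hxA⟩ = wop cA permA wgt h2A ⟨x0, hxA⟩ from rfl,
      wop_single cA permA wgt h2A (fun _ => rfl) (n, false) 1 hxA]
    norm_num [cA, permA]
  have hmAB : x0 ∈ (pComp opA opB).domain :=
    pComp_mem _ _ hxB (by rw [hBx0]; exact single_mem_Dom wgt _ _)
  have hmBA : x0 ∈ (pComp opB opA).domain :=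
    pComp_mem _ _ hxA (by rw [hAx0]; exact single_mem_Dom wgt _ _)
  refine ⟨⟨x0, hmAB, hmBA⟩, by rw [norm_lp_single]; simp, ?_⟩
  have vAB : pComp opA opB ⟨x0, hmAB⟩
      = lp.single 2 (n, true) (((n : ℝ) : ℂ) * ((n : ℝ) : ℂ)) := by
    rw [pComp_apply _ _ hxB (by rw [hBx0]; exact single_mem_Dom wgt _ _) hmAB]
    rw [opA_congr (y := ⟨lp.single 2 (n, true) (((n : ℝ) : ℂ)), single_mem_Dom wgt _ _⟩)
      (show ((⟨(opB ⟨x0, hxB⟩ : Hl Idx), _⟩ : opA.domain) : Hl Idx) = _ from hBx0)]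
    rw [show opA ⟨lp.single 2 (n, true) (((n : ℝ) : ℂ)), single_mem_Dom wgt _ _⟩
        = wop cA permA wgt h2A ⟨lp.single 2 (n, true) (((n : ℝ) : ℂ)), single_mem_Dom wgt _ _⟩
        from rfl,
      wop_single cA permA wgt h2A (fun _ => rfl) (n, true) (((n : ℝ) : ℂ)) (single_mem_Dom wgt _ _)]
    norm_num [cA, permA]
  have vBA : pComp opB opA ⟨x0, hmBA⟩
      = lp.single 2 (n, true) (-(((n : ℝ) : ℂ) * ((n : ℝ) : ℂ))) := by
    rw [pComp_apply _ _ hxA (by rw [hAx0]; exact single_mem_Dom wgt _ _) hmBA]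
    rw [opB_congr (y := ⟨lp.single 2 (n, false) ((-(n : ℝ) : ℂ)), single_mem_Dom wgt _ _⟩)
      (show ((⟨(opA ⟨x0, hxA⟩ : Hl Idx), _⟩ : opB.domain) : Hl Idx) = _ from hAx0)]
    rw [show opB ⟨lp.single 2 (n, false) ((-(n : ℝ) : ℂ)), single_mem_Dom wgt _ _⟩
        = wop cB permB wgt h2B ⟨lp.single 2 (n, false) ((-(n : ℝ) : ℂ)), single_mem_Dom wgt _ _⟩
        from rfl,
      wop_single cB permB wgt h2B hinvB (n, false) ((-(n : ℝ) : ℂ)) (single_mem_Dom wgt _ _)]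
    norm_num [cB, permB_apply]
    try ring
  rw [LinearPMap.sub_apply, vAB, vBA, lp_single_sub, sub_neg_eq_add, norm_lp_single]
  have h1n : (1 : ℝ) ≤ (n : ℝ) := by
    have : (0 : ℝ) ≤ max C 0 := le_max_right _ _
    have : (0 : ℝ) < n := lt_of_le_of_lt this hn
    exact_mod_cast Nat.one_le_iff_ne_zero.2 (by exact_mod_cast this.ne')
  have hCn : C < (n : ℝ) := lt_of_le_of_lt (le_max_left C 0) hn
  have hnorm : ‖(((n : ℝ) : ℂ) * ((n : ℝ) : ℂ) + ((n : ℝ) : ℂ) * ((n : ℝ) : ℂ))‖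
      = 2 * (n : ℝ) * (n : ℝ) := by
    rw [show (((n : ℝ) : ℂ) * ((n : ℝ) : ℂ) + ((n : ℝ) : ℂ) * ((n : ℝ) : ℂ))
        = (((2 * (n : ℝ) * (n : ℝ) : ℝ)) : ℂ) by push_cast; ring]
    rw [Complex.norm_real, Real.norm_eq_abs, abs_of_nonneg (by positivity)]
  rw [hnorm]
  nlinarith

end Final


/-- There exist a complex Hilbert space `H` and two unbounded self-adjoint operators `A`, `B`
with `D(A) = D(B)`, such that `A ∘ A - B ∘ B` is bounded while `A ∘ B - B ∘ A` is unbounded. -/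
theorem stmt_2 :
    ∃ (𝓗 : HilbertC) (A B : 𝓗.carrier →ₗ.[ℂ] 𝓗.carrier),
      A† = A ∧ B† = B ∧ ¬ IsBddOp A ∧ ¬ IsBddOp B ∧ A.domain = B.domain ∧
      IsBddOp (pComp A A - pComp B B) ∧ ¬ IsBddOp (pComp A B - pComp B A) := by
  exact ⟨⟨Hl Idx⟩, opA, opB, opA_selfAdjoint, opB_selfAdjoint, opA_unbounded, opB_unbounded,
    rfl, sq_diff_bounded, comm_unbounded⟩
end
end

section
/- Let A and B be self-adjoint operators on a complex Hilbert space H with D(A) ∩ D(B) = {0}. Then the operator T on H × H with domain D(B) × D(A) given by T(x, y) = (Ay, Bx) is densely defined and closed, and D(T ∘ T*) ∩ D(T* ∘ T) = {0}; hence the self-commutator T ∘ T* − T* ∘ T has domain {0}. -/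
/- Unbounded (partially defined) operators on a complex Hilbert space are modelled by
Mathlib's `LinearPMap` (`H →ₗ.[ℂ] H`).  `T†` is the adjoint, `T.IsClosed` means the graph
of `T` is closed, and `f - g` is the difference with domain `D(f) ⊓ D(g)`. -/

noncomputable section

open LinearPMap

section Aux

local notation "⟪" x ", " y "⟫" => @inner ℂ _ _ x y

lemma pmap_congr {R E F : Type*} [Ring R] [AddCommGroup E] [Module R E]
    [AddCommGroup F] [Module R F] {f g : E →ₗ.[R] F} (h : f = g) (x : f.domain) :
    f x = g ⟨x, h ▸ x.2⟩ := by subst h; rfl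

variable {E F : Type*} [NormedAddCommGroup E] [InnerProductSpace ℂ E]
  [NormedAddCommGroup F] [InnerProductSpace ℂ F] [CompleteSpace E] [CompleteSpace F]

lemma adjoint_isClosed (T : E →ₗ.[ℂ] F) (hT : Dense (T.domain : Set E)) :
    (T†).IsClosed := by
  have hgraph : ((T†).graph : Set (F × E)) =
      ⋂ x : T.domain, {p : F × E | ⟪p.2, (x : E)⟫ = ⟪p.1, T x⟫} := by
    ext p
    simp only [SetLike.mem_coe, Set.mem_iInter, Set.mem_setOf_eq, LinearPMap.mem_graph_iff]
    constructor
    · rintro ⟨y, h1, h2⟩ x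
      rw [← h1, ← h2]
      exact T.adjoint_isFormalAdjoint hT y x
    · intro h
      have hp1 : p.1 ∈ (T†).domain := T.mem_adjoint_domain_of_exists p.1 ⟨p.2, h⟩
      exact ⟨⟨p.1, hp1⟩, rfl, T.adjoint_apply_eq hT ⟨p.1, hp1⟩ h⟩
  show _root_.IsClosed ((T†).graph : Set (F × E))
  rw [hgraph]
  exact isClosed_iInter fun x =>
    isClosed_eq (continuous_snd.inner continuous_const) (continuous_fst.inner continuous_const)

lemma dense_of_adjoint_eq (A : E →ₗ.[ℂ] E) (h : A† = A) : Dense (A.domain : Set E) := by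
  by_contra hd
  have hz : ∀ x : A.domain, A x = 0 := fun x => by
    rw [pmap_congr h.symm x]
    exact A.adjoint_apply_of_not_dense hd _
  have htop : ∀ y : E, y ∈ (A†).domain := fun y =>
    A.mem_adjoint_domain_of_exists y ⟨0, fun x => by rw [hz x, inner_zero_left, inner_zero_right]⟩
  apply hd
  have : A.domain = ⊤ := by
    rw [← congrArg LinearPMap.domain h]
    exact eq_top_iff.mpr fun y _ => htop y
  rw [this]
  simp [dense_univ]

variable {H : Type} [NormedAddCommGroup H] [InnerProductSpace ℂ H] [CompleteSpace H]

/-- The operator `(x, y) ↦ (A y, B x)` with domain `D(B) × D(A)`. -/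
def Op (A B : H →ₗ.[ℂ] H) : HxH H →ₗ.[ℂ] HxH H where
  domain := (Submodule.prod B.domain A.domain).comap (prodE H).toLinearMap
  toFun :=
    { toFun := fun x => (prodE H).symm
        (A ⟨(prodE H (x : HxH H)).2, x.2.2⟩, B ⟨(prodE H (x : HxH H)).1, x.2.1⟩)
      map_add' := fun x y => by
        rw [← map_add ((prodE H).symm)]
        exact congrArg _ (Prod.ext
          (A.map_add ⟨(prodE H (x : HxH H)).2, x.2.2⟩ ⟨(prodE H (y : HxH H)).2, y.2.2⟩)
          (B.map_add ⟨(prodE H (x : HxH H)).1, x.2.1⟩ ⟨(prodE H (y : HxH H)).1, y.2.1⟩))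
      map_smul' := fun c x => by
        rw [← map_smul ((prodE H).symm)]
        exact congrArg (⇑(prodE H).symm) (Prod.ext
          (A.map_smul c ⟨(prodE H (x : HxH H)).2, x.2.2⟩)
          (B.map_smul c ⟨(prodE H (x : HxH H)).1, x.2.1⟩)) }

lemma Op_dense {A B : H →ₗ.[ℂ] H} (hA : Dense (A.domain : Set H))
    (hB : Dense (B.domain : Set H)) : Dense ((Op A B).domain : Set (HxH H)) := by
  have h : ((Op A B).domain : Set (HxH H)) =
      ⇑(WithLp.prodContinuousLinearEquiv 2 ℂ H H).toHomeomorph ⁻¹'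
        ((B.domain : Set H) ×ˢ (A.domain : Set H)) := rfl
  rw [h, dense_iff_closure_eq,
    ← (WithLp.prodContinuousLinearEquiv 2 ℂ H H).toHomeomorph.preimage_closure,
    dense_iff_closure_eq.mp (hB.prod hA), Set.preimage_univ]

lemma sa_symm (A : E →ₗ.[ℂ] E) (hA : A† = A) (hAd : Dense (A.domain : Set E))
    (u w : A.domain) : ⟪A u, (w : E)⟫ = ⟪(u : E), A w⟫ := by
  rw [pmap_congr hA.symm u]
  exact A.adjoint_isFormalAdjoint hAd _ w

lemma Op_isFormalAdjoint {A B : H →ₗ.[ℂ] H} (hA : A† = A) (hB : B† = B)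
    (hAd : Dense (A.domain : Set H)) (hBd : Dense (B.domain : Set H)) :
    (Op A B).IsFormalAdjoint (Op B A) := by
  intro x y
  have h1 : ⟪A ⟨(prodE H (x : HxH H)).2, x.2.2⟩, (prodE H (y : HxH H)).1⟫
      = ⟪(prodE H (x : HxH H)).2, A ⟨(prodE H (y : HxH H)).1, y.2.1⟩⟫ :=
    sa_symm A hA hAd ⟨(prodE H (x : HxH H)).2, x.2.2⟩ ⟨(prodE H (y : HxH H)).1, y.2.1⟩
  have h2 : ⟪B ⟨(prodE H (x : HxH H)).1, x.2.1⟩, (prodE H (y : HxH H)).2⟫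
      = ⟪(prodE H (x : HxH H)).1, B ⟨(prodE H (y : HxH H)).2, y.2.2⟩⟫ :=
    sa_symm B hB hBd ⟨(prodE H (x : HxH H)).1, x.2.1⟩ ⟨(prodE H (y : HxH H)).2, y.2.2⟩
  show ⟪A ⟨(prodE H (x : HxH H)).2, x.2.2⟩, (prodE H (y : HxH H)).1⟫
      + ⟪B ⟨(prodE H (x : HxH H)).1, x.2.1⟩, (prodE H (y : HxH H)).2⟫
    = ⟪(prodE H (x : HxH H)).1, B ⟨(prodE H (y : HxH H)).2, y.2.2⟩⟫
      + ⟪(prodE H (x : HxH H)).2, A ⟨(prodE H (y : HxH H)).1, y.2.1⟩⟫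
  rw [h1, h2, add_comm]

lemma Op_adjoint {A B : H →ₗ.[ℂ] H} (hA : A† = A) (hB : B† = B) :
    (Op A B)† = Op B A := by
  have hAd := dense_of_adjoint_eq A hA
  have hBd := dense_of_adjoint_eq B hB
  have hTd : Dense ((Op A B).domain : Set (HxH H)) := Op_dense hAd hBd
  have hle : Op B A ≤ (Op A B)† :=
    (Op_isFormalAdjoint hA hB hAd hBd).le_adjoint hTd
  have hdom : ((Op A B)†).domain ≤ (Op B A).domain := by
    intro z hz
    refine Submodule.mem_comap.mpr (Submodule.mem_prod.mpr ⟨?_, ?_⟩)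
    · -- (prodE z).1 ∈ A.domain
      have : (prodE H z).1 ∈ (A†).domain := by
        apply A.mem_adjoint_domain_of_exists
        refine ⟨(prodE H (((Op A B)†) ⟨z, hz⟩ : HxH H)).2, fun w => ?_⟩
        have hmem : (prodE H).symm (0, (w : H)) ∈ (Op A B).domain :=
          Submodule.mem_comap.mpr (Submodule.mem_prod.mpr ⟨B.domain.zero_mem, w.2⟩)
        have hfa := (Op A B).adjoint_isFormalAdjoint hTd ⟨z, hz⟩ ⟨_, hmem⟩
        have hfa' : ⟪(prodE H (((Op A B)†) ⟨z, hz⟩ : HxH H)).1, (0 : H)⟫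
            + ⟪(prodE H (((Op A B)†) ⟨z, hz⟩ : HxH H)).2, (w : H)⟫
            = ⟪(prodE H z).1, A ⟨(w : H), w.2⟩⟫ + ⟪(prodE H z).2, B ⟨0, B.domain.zero_mem⟩⟫ := hfa
        have hB0 : B ⟨0, B.domain.zero_mem⟩ = 0 := B.toFun.map_zero
        rw [hB0, inner_zero_right, inner_zero_right, zero_add, add_zero] at hfa'
        exact hfa'
      exact hA ▸ this
    · -- (prodE z).2 ∈ B.domain
      have : (prodE H z).2 ∈ (B†).domain := by
        apply B.mem_adjoint_domain_of_exists
        refine ⟨(prodE H (((Op A B)†) ⟨z, hz⟩ : HxH H)).1, fun w => ?_⟩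
        have hmem : (prodE H).symm ((w : H), 0) ∈ (Op A B).domain :=
          Submodule.mem_comap.mpr (Submodule.mem_prod.mpr ⟨w.2, A.domain.zero_mem⟩)
        have hfa := (Op A B).adjoint_isFormalAdjoint hTd ⟨z, hz⟩ ⟨_, hmem⟩
        have hfa' : ⟪(prodE H (((Op A B)†) ⟨z, hz⟩ : HxH H)).1, (w : H)⟫
            + ⟪(prodE H (((Op A B)†) ⟨z, hz⟩ : HxH H)).2, (0 : H)⟫
            = ⟪(prodE H z).1, A ⟨0, A.domain.zero_mem⟩⟫ + ⟪(prodE H z).2, B ⟨(w : H), w.2⟩⟫ := hfa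
        have hA0 : A ⟨0, A.domain.zero_mem⟩ = 0 := A.toFun.map_zero
        rw [hA0, inner_zero_right, inner_zero_right, add_zero, zero_add] at hfa'
        exact hfa'
      exact hB ▸ this
  exact (eq_of_le_of_domain_eq hle (le_antisymm hle.1 hdom)).symm

end Aux

/-- Let `A`, `B` be self-adjoint operators on a complex Hilbert space `H` with
`D(A) ∩ D(B) = {0}`.  Then the operator `T` on `H × H` with domain `D(B) × D(A)` given by
`T (x, y) = (A y, B x)` is densely defined and closed, and
`D(T ∘ T†) ∩ D(T† ∘ T) = {0}`; hence the self-commutator `T ∘ T† - T† ∘ T` has domain `{0}`. -/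
theorem stmt_12 {H : Type} [NormedAddCommGroup H] [InnerProductSpace ℂ H] [CompleteSpace H]
    (A B : H →ₗ.[ℂ] H) (hA_sa : A† = A) (hB_sa : B† = B)
    (hAB : A.domain ⊓ B.domain = ⊥)
    (T : HxH H →ₗ.[ℂ] HxH H)
    (hTdom : T.domain = (Submodule.prod B.domain A.domain).comap (prodE H).toLinearMap)
    (hT : ∀ x : T.domain, ∀ (hx : (prodE H (x : HxH H)).1 ∈ B.domain)
        (hy : (prodE H (x : HxH H)).2 ∈ A.domain),
      prodE H (T x) = (A ⟨(prodE H (x : HxH H)).2, hy⟩, B ⟨(prodE H (x : HxH H)).1, hx⟩)) :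
    Dense (T.domain : Set (HxH H)) ∧ T.IsClosed ∧
    (pComp T (T†)).domain ⊓ (pComp (T†) T).domain = ⊥ ∧
    (pComp T (T†) - pComp (T†) T).domain = ⊥ := by
  have hAd := dense_of_adjoint_eq A hA_sa
  have hBd := dense_of_adjoint_eq B hB_sa
  have hTop : T = Op A B := by
    apply LinearPMap.ext hTdom
    intro x' hf hg
    suffices key : ∀ (x : T.domain) (y : (Op A B).domain), (x : HxH H) = y → T x = Op A B y from
      key ⟨x', hf⟩ ⟨x', hg⟩ rfl
    intro x y hxy
    have hx' : (prodE H (x : HxH H)) ∈ Submodule.prod B.domain A.domain :=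
      le_of_eq hTdom x.2
    have h := hT x hx'.1 hx'.2
    apply (prodE H).injective
    rw [h]
    show _ = prodE H ((prodE H).symm
      (A ⟨(prodE H (y : HxH H)).2, y.2.2⟩, B ⟨(prodE H (y : HxH H)).1, y.2.1⟩))
    rw [LinearEquiv.apply_symm_apply]
    have e1 : (⟨(prodE H (x : HxH H)).1, hx'.1⟩ : B.domain)
        = ⟨(prodE H (y : HxH H)).1, y.2.1⟩ :=
      Subtype.ext (congrArg (fun z : HxH H => (prodE H z).1) hxy)
    have e2 : (⟨(prodE H (x : HxH H)).2, hx'.2⟩ : A.domain)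
        = ⟨(prodE H (y : HxH H)).2, y.2.2⟩ :=
      Subtype.ext (congrArg (fun z : HxH H => (prodE H z).2) hxy)
    rw [e1, e2]
  have hTadj : T† = Op B A := by rw [hTop, Op_adjoint hA_sa hB_sa]
  have hkey : (pComp T (T†)).domain ⊓ (pComp (T†) T).domain = ⊥ := by
    refine eq_bot_iff.mpr (le_trans
      (inf_le_inf (Submodule.map_subtype_le _ _) (Submodule.map_subtype_le _ _)) ?_)
    rw [hTadj, hTop]
    intro z hz
    have h1 : (prodE H z).1 ∈ A.domain ⊓ B.domain := ⟨hz.1.1, hz.2.1⟩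
    have h2 : (prodE H z).2 ∈ A.domain ⊓ B.domain := ⟨hz.2.2, hz.1.2⟩
    rw [hAB, Submodule.mem_bot] at h1 h2
    have hz0 : prodE H z = 0 := Prod.ext h1 h2
    rw [Submodule.mem_bot]
    apply (prodE H).injective
    rw [hz0, _root_.map_zero]
  refine ⟨?_, ?_, hkey, ?_⟩
  · rw [hTop]
    exact Op_dense hAd hBd
  · rw [hTop, ← Op_adjoint hB_sa hA_sa]
    exact adjoint_isClosed _ (Op_dense hBd hAd)
  · rw [LinearPMap.sub_domain]
    exact hkey
end
end
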